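/- arXiv:2411.13277 — 5 statements merged into one kernel-verified Lean document; each statement's English description precedes it below -/
import Mathlib

section
/- Let H be a separable real Hilbert space and let F : H → H be a continuous map that is Fréchet differentiable at every point of H, and assume: (i) the range of F is contained in a finite-dimensional subspace of H; (ii) the range of F is a bounded subset of H; (iii) for every u ∈ H, no real eigenvalue of the Fréchet derivative DF(u) (a bounded linear operator on H) lies in the interval (-∞, -1]. Then the map f : H → H defined by f(u) = u + F(u) is bijective. -/
open scoped RealInnerProductSpace

open Filter Metric Set Topology

section Aux

variable {E : Type*} [NormedAddCommGroup E] [InnerProductSpace ℝ E] [FiniteDimensional ℝ E]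

/-- Minimum principle: if the distance-squared to `y` has a local strict-boundary structure
on a closed ball, then `g` attains the value `y` inside the ball (uses that every derivative
is injective, hence surjective in finite dimension). -/
lemma aux_exists_zero (g : E → E) (Dg : E → E →L[ℝ] E)
    (hg : ∀ x, HasFDerivAt g (Dg x) x)
    (hinj : ∀ x, Function.Injective (Dg x))
    (y x₀ : E) (ρ : ℝ) (hρ : 0 < ρ)
    (hbnd : ∀ z, ‖z - x₀‖ = ρ → ‖g x₀ - y‖ < ‖g z - y‖) :
    ∃ z, ‖z - x₀‖ < ρ ∧ g z = y := by
  have hgc : Continuous g := by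
    rw [continuous_iff_continuousAt]; exact fun x => (hg x).continuousAt
  have hΦc : ContinuousOn (fun w => ⟪g w - y, g w - y⟫) (closedBall x₀ ρ) :=
    ((hgc.sub continuous_const).inner (hgc.sub continuous_const)).continuousOn
  obtain ⟨z, hzmem, hzmin⟩ := (isCompact_closedBall x₀ ρ).exists_isMinOn
    ⟨x₀, mem_closedBall_self hρ.le⟩ hΦc
  rw [isMinOn_iff] at hzmin
  have hzlt : ‖z - x₀‖ < ρ := by
    rcases lt_or_eq_of_le (mem_closedBall_iff_norm.mp hzmem) with h | h
    · exact h
    · exfalso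
      have hb := hbnd z h
      have h1 : ⟪g x₀ - y, g x₀ - y⟫ < ⟪g z - y, g z - y⟫ := by
        rw [real_inner_self_eq_norm_sq, real_inner_self_eq_norm_sq]
        nlinarith [norm_nonneg (g x₀ - y)]
      have h2 := hzmin x₀ (mem_closedBall_self hρ.le)
      linarith
  have hloc : IsLocalMin (fun w => ⟪g w - y, g w - y⟫) z := by
    apply (isMinOn_iff.mpr hzmin).isLocalMin
    exact Filter.mem_of_superset (isOpen_ball.mem_nhds (mem_ball_iff_norm.mpr hzlt))
      ball_subset_closedBall
  have hsub : HasFDerivAt (fun w => g w - y) (Dg z) z := (hg z).sub_const y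
  have hΦd := hsub.inner ℝ hsub
  have hzero := hloc.hasFDerivAt_eq_zero hΦd
  have hsurj : Function.Surjective (Dg z) := by
    have h := (LinearMap.injective_iff_surjective
      (f := ((Dg z : E →L[ℝ] E) : E →ₗ[ℝ] E))).mp (hinj z)
    exact h
  obtain ⟨w₀, hw₀⟩ := hsurj (g z - y)
  have hval := DFunLike.congr_fun hzero w₀
  simp only [ContinuousLinearMap.comp_apply, ContinuousLinearMap.prod_apply,
    fderivInnerCLM_apply, ContinuousLinearMap.zero_apply, hw₀] at hval
  have hin : ⟪g z - y, g z - y⟫ = 0 := by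
    have := real_inner_comm (g z - y) (g z - y)
    linarith
  have : g z - y = 0 := inner_self_eq_zero.mp hin
  exact ⟨z, hzlt, sub_eq_zero.mp this⟩

/-- Uniform lower bound for the family `w ↦ w + t • T w`, `t ∈ [0,1]`, when each member is
injective. -/
lemma aux_bound (T : E →L[ℝ] E)
    (hinj : ∀ t ∈ Icc (0:ℝ) 1, Function.Injective fun w : E => w + t • T w)
    (w₁ : E) (hw₁ : w₁ ≠ 0) :
    ∃ c > 0, ∀ t ∈ Icc (0:ℝ) 1, ∀ w : E, c * ‖w‖ ≤ ‖w + t • T w‖ := by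
  have hKc : IsCompact ((Icc (0:ℝ) 1) ×ˢ sphere (0:E) 1) :=
    isCompact_Icc.prod (isCompact_sphere 0 1)
  have hKne : ((Icc (0:ℝ) 1) ×ˢ sphere (0:E) 1).Nonempty := by
    refine ⟨(0, ‖w₁‖⁻¹ • w₁), ⟨⟨le_refl 0, zero_le_one⟩, ?_⟩⟩
    rw [mem_sphere_zero_iff_norm, norm_smul, Real.norm_eq_abs,
      abs_of_nonneg (inv_nonneg.mpr (norm_nonneg w₁)),
      inv_mul_cancel₀ (norm_ne_zero_iff.mpr hw₁)]
  have hfc : ContinuousOn (fun p : ℝ × E => ‖p.2 + p.1 • T p.2‖)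
      ((Icc (0:ℝ) 1) ×ˢ sphere (0:E) 1) :=
    ((continuous_snd.add (continuous_fst.smul (T.continuous.comp continuous_snd))).norm).continuousOn
  obtain ⟨⟨t₀, w₀⟩, hmem, hmin⟩ := hKc.exists_isMinOn hKne hfc
  rw [isMinOn_iff] at hmin
  have hw₀s : ‖w₀‖ = 1 := mem_sphere_zero_iff_norm.mp hmem.2
  have hc : 0 < ‖w₀ + t₀ • T w₀‖ := by
    rw [norm_pos_iff]
    intro h0
    have hzero : (fun w : E => w + t₀ • T w) w₀ = (fun w : E => w + t₀ • T w) 0 := by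
      simp only [h0, map_zero, smul_zero, add_zero]
    have := hinj t₀ hmem.1 hzero
    rw [this] at hw₀s; simp at hw₀s
  refine ⟨‖w₀ + t₀ • T w₀‖, hc, fun t ht w => ?_⟩
  rcases eq_or_ne w 0 with rfl | hw
  · simp
  · have hwn : ‖w‖ ≠ 0 := norm_ne_zero_iff.mpr hw
    have humem : (t, ‖w‖⁻¹ • w) ∈ (Icc (0:ℝ) 1) ×ˢ sphere (0:E) 1 := by
      refine ⟨ht, ?_⟩
      rw [mem_sphere_zero_iff_norm, norm_smul, Real.norm_eq_abs,
        abs_of_nonneg (inv_nonneg.mpr (norm_nonneg w)), inv_mul_cancel₀ hwn]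
    have h1 := hmin _ humem
    have h2 : ‖(‖w‖⁻¹ • w) + t • T (‖w‖⁻¹ • w)‖ = ‖w‖⁻¹ * ‖w + t • T w‖ := by
      rw [map_smul, smul_comm t (‖w‖⁻¹), ← smul_add, norm_smul, Real.norm_eq_abs,
        abs_of_nonneg (inv_nonneg.mpr (norm_nonneg w))]
    rw [h2] at h1
    calc ‖w₀ + t₀ • T w₀‖ * ‖w‖ ≤ (‖w‖⁻¹ * ‖w + t • T w‖) * ‖w‖ :=
          mul_le_mul_of_nonneg_right h1 (norm_nonneg w)
      _ = ‖w + t • T w‖ := by field_simp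
    
/-- Core injectivity lemma: if `G` is everywhere differentiable with bounded norm, and all the
maps `1 + t • DG x` for `t ∈ [0,1]` are injective, then `x + G x = G 0` forces `x = 0`. -/
lemma core_inj (G : E → E) (DG : E → E →L[ℝ] E)
    (hG : ∀ x, HasFDerivAt G (DG x) x)
    (M : ℝ) (hM : ∀ x, ‖G x‖ ≤ M)
    (hinj : ∀ t ∈ Icc (0:ℝ) 1, ∀ x : E, Function.Injective fun w : E => w + t • DG x w)
    (x : E) (hx : x + G x = G 0) : x = 0 := by
  by_contra hx0
  have hGc : Continuous G := by
    rw [continuous_iff_continuousAt]; exact fun z => (hG z).continuousAt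
  have hM0 : 0 ≤ M := (norm_nonneg _).trans (hM 0)
  set A : Set ℝ := {t | t ∈ Icc (0:ℝ) 1 ∧ ∃ z : E, z ≠ 0 ∧ z + t • G z = t • G 0} with hA
  have h1A : 1 ∈ A := ⟨⟨zero_le_one, le_refl 1⟩, x, hx0, by simpa [one_smul] using hx⟩
  have hAne : A.Nonempty := ⟨1, h1A⟩
  have hAbdd : BddBelow A := ⟨0, fun t ht => ht.1.1⟩
  obtain ⟨ts, -, hts_tendsto, hts_mem⟩ := exists_seq_tendsto_sInf hAne hAbdd
  set t₀ := sInf A with ht₀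
  have ht₀mem : t₀ ∈ Icc (0:ℝ) 1 :=
    ⟨le_csInf hAne fun t ht => ht.1.1, csInf_le hAbdd h1A⟩
  choose zs hzs0 hzseq using fun n => (hts_mem n).2
  have hts_icc : ∀ n, ts n ∈ Icc (0:ℝ) 1 := fun n => (hts_mem n).1
  have htabs : ∀ n, |ts n| ≤ 1 := fun n =>
    abs_le.mpr ⟨by linarith [(hts_icc n).1], (hts_icc n).2⟩
  have hzs_bd : ∀ n, zs n ∈ closedBall (0:E) (2*M) := by
    intro n
    have h := hzseq n
    have heq : zs n = ts n • G 0 - ts n • G (zs n) := by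
      rw [eq_sub_iff_add_eq]; exact h
    rw [mem_closedBall_zero_iff, heq]
    have e1 : ‖ts n • G 0‖ ≤ M := by
      rw [norm_smul, Real.norm_eq_abs]
      calc |ts n| * ‖G 0‖ ≤ 1 * M := mul_le_mul (htabs n) (hM 0) (norm_nonneg _) zero_le_one
        _ = M := one_mul M
    have e2 : ‖ts n • G (zs n)‖ ≤ M := by
      rw [norm_smul, Real.norm_eq_abs]
      calc |ts n| * ‖G (zs n)‖ ≤ 1 * M := mul_le_mul (htabs n) (hM _) (norm_nonneg _) zero_le_one
        _ = M := one_mul M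
    calc ‖ts n • G 0 - ts n • G (zs n)‖ ≤ ‖ts n • G 0‖ + ‖ts n • G (zs n)‖ := norm_sub_le _ _
      _ ≤ 2*M := by linarith
  obtain ⟨z₀, hz₀mem, φ, hφmono, hφlim⟩ :=
    (isCompact_closedBall (0:E) (2*M)).tendsto_subseq hzs_bd
  have htφ : Tendsto (ts ∘ φ) atTop (𝓝 t₀) := hts_tendsto.comp hφmono.tendsto_atTop
  have heqlim : z₀ + t₀ • G z₀ = t₀ • G 0 := by
    have hc1 : Tendsto (fun n => zs (φ n) + (ts (φ n)) • G (zs (φ n)) - (ts (φ n)) • G 0)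
        atTop (𝓝 (z₀ + t₀ • G z₀ - t₀ • G 0)) := by
      refine Tendsto.sub (Tendsto.add hφlim (Tendsto.smul htφ ?_)) (htφ.smul tendsto_const_nhds)
      exact (hGc.tendsto z₀).comp hφlim
    have hzero : (fun n => zs (φ n) + (ts (φ n)) • G (zs (φ n)) - (ts (φ n)) • G 0)
        = fun _ => (0:E) := by
      funext n; rw [hzseq (φ n)]; simp
    rw [hzero] at hc1
    have := tendsto_nhds_unique hc1 tendsto_const_nhds
    exact sub_eq_zero.mp this
  rcases eq_or_ne z₀ 0 with hz₀ | hz₀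
  · -- collapse into the anchor is impossible
    obtain ⟨c, hc, hcb⟩ := aux_bound (DG 0) (fun t ht => hinj t ht 0) (zs (φ 0)) (hzs0 (φ 0))
    have hlo := hasFDerivAt_iff_isLittleO_nhds_zero.mp (hG 0)
    rw [Asymptotics.isLittleO_iff] at hlo
    obtain ⟨δ, hδ, hball⟩ := Metric.eventually_nhds_iff.mp (hlo (show (0:ℝ) < c/2 by linarith))
    rw [hz₀] at hφlim
    obtain ⟨n, hn⟩ := (Metric.tendsto_nhds.mp hφlim δ hδ).exists
    set z := zs (φ n) with hzdef
    set t := ts (φ n) with htdef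
    have hzne : z ≠ 0 := hzs0 (φ n)
    have heq : z + t • G z = t • G 0 := hzseq (φ n)
    have hlob : ‖G z - G 0 - DG 0 z‖ ≤ c/2 * ‖z‖ := by
      have := hball (show dist z 0 < δ by simpa using hn)
      simpa using this
    have h1 : z + t • G z - t • G 0 = (z + t • DG 0 z) + t • (G z - G 0 - DG 0 z) := by
      module
    have h0 : z + t • G z - t • G 0 = 0 := by rw [heq]; simp
    rw [h1] at h0
    have h2 : c * ‖z‖ ≤ ‖z + t • DG 0 z‖ := hcb t (hts_icc (φ n)) z
    have h3 : ‖t • (G z - G 0 - DG 0 z)‖ ≤ c/2 * ‖z‖ := by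
      rw [norm_smul, Real.norm_eq_abs]
      calc |t| * ‖G z - G 0 - DG 0 z‖ ≤ 1 * (c/2 * ‖z‖) :=
            mul_le_mul (htabs (φ n)) hlob (norm_nonneg _) zero_le_one
        _ = c/2 * ‖z‖ := one_mul _
    have h4 : ‖z + t • DG 0 z‖ ≤ c/2 * ‖z‖ := by
      have he : z + t • DG 0 z = -(t • (G z - G 0 - DG 0 z)) :=
        eq_neg_of_add_eq_zero_left h0
      rw [he, norm_neg]; exact h3
    have h5 : 0 < ‖z‖ := norm_pos_iff.mpr hzne
    nlinarith
  · -- t₀ ∈ A; push the non-anchor solution to a smaller t, contradicting sInf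
    have hteq0 : t₀ ≠ 0 := by
      intro h0
      rw [h0, zero_smul, zero_smul, add_zero] at heqlim
      exact hz₀ heqlim
    have ht₀pos : 0 < t₀ := lt_of_le_of_ne ht₀mem.1 (Ne.symm hteq0)
    obtain ⟨c, hc, hcb⟩ := aux_bound (DG z₀) (fun t ht => hinj t ht z₀) z₀ hz₀
    have hlo := hasFDerivAt_iff_isLittleO_nhds_zero.mp (hG z₀)
    rw [Asymptotics.isLittleO_iff] at hlo
    obtain ⟨δ, hδ, hball⟩ := Metric.eventually_nhds_iff.mp (hlo (show (0:ℝ) < c/2 by linarith))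
    have hz₀pos : 0 < ‖z₀‖ := norm_pos_iff.mpr hz₀
    set ρ := min (δ/2) (‖z₀‖/2) with hρdef
    have hρpos : 0 < ρ := lt_min (by linarith) (by linarith)
    set κ := c/2 * ρ with hκdef
    have hκpos : 0 < κ := mul_pos (by linarith) hρpos
    have hsph : ∀ z : E, ‖z - z₀‖ = ρ → κ ≤ ‖z + t₀ • G z - t₀ • G 0‖ := by
      intro z hz
      have hlob : ‖G z - G z₀ - DG z₀ (z - z₀)‖ ≤ c/2 * ‖z - z₀‖ := by
        have h5 := hball (show dist (z - z₀) 0 < δ by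
          rw [dist_zero_right, hz]
          calc ρ ≤ δ/2 := min_le_left _ _
            _ < δ := by linarith)
        rw [show z₀ + (z - z₀) = z by abel] at h5
        exact h5
      have hid : z + t₀ • G z - t₀ • G 0 =
          ((z - z₀) + t₀ • DG z₀ (z - z₀)) + t₀ • (G z - G z₀ - DG z₀ (z - z₀)) := by
        rw [← heqlim]; module
      rw [hid]
      have h2 := hcb t₀ ht₀mem (z - z₀)
      rw [hz] at h2
      have h3 : ‖t₀ • (G z - G z₀ - DG z₀ (z - z₀))‖ ≤ c/2 * ρ := by
        rw [norm_smul, Real.norm_eq_abs, abs_of_nonneg ht₀mem.1]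
        calc t₀ * ‖G z - G z₀ - DG z₀ (z - z₀)‖ ≤ 1 * (c/2 * ‖z - z₀‖) :=
              mul_le_mul ht₀mem.2 hlob (norm_nonneg _) zero_le_one
          _ = c/2 * ρ := by rw [one_mul, hz]
      have habs : ‖(z - z₀) + t₀ • DG z₀ (z - z₀)‖
          - ‖t₀ • (G z - G z₀ - DG z₀ (z - z₀))‖
          ≤ ‖((z - z₀) + t₀ • DG z₀ (z - z₀)) + t₀ • (G z - G z₀ - DG z₀ (z - z₀))‖ := by
        have h4 := norm_sub_le
          (((z - z₀) + t₀ • DG z₀ (z - z₀)) + t₀ • (G z - G z₀ - DG z₀ (z - z₀)))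
          (t₀ • (G z - G z₀ - DG z₀ (z - z₀)))
        rw [add_sub_cancel_right] at h4
        linarith
      have : κ = c * ρ - c/2 * ρ := by rw [hκdef]; ring
      linarith
    set Δ := min (t₀/2) (κ/(4*M+1)) with hΔdef
    have hΔpos : 0 < Δ := lt_min (by linarith) (by positivity)
    set t' := t₀ - Δ with ht'def
    have hΔle : Δ ≤ t₀/2 := min_le_left _ _
    have ht'mem : t' ∈ Icc (0:ℝ) 1 := ⟨by simp only [ht'def]; linarith,
      by simp only [ht'def]; linarith [ht₀mem.2]⟩
    have ht'lt : t' < t₀ := by simp only [ht'def]; linarith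
    have hGd2 : ∀ z : E, ‖G z - G 0‖ ≤ 2*M := by
      intro z
      calc ‖G z - G 0‖ ≤ ‖G z‖ + ‖G 0‖ := norm_sub_le _ _
        _ ≤ 2*M := by linarith [hM z, hM 0]
    have hpert : ∀ z : E, ‖(z + t' • G z - t' • G 0) - (z + t₀ • G z - t₀ • G 0)‖ ≤ 2*M*Δ := by
      intro z
      have hid : (z + t' • G z - t' • G 0) - (z + t₀ • G z - t₀ • G 0)
          = (t' - t₀) • (G z - G 0) := by module
      rw [hid, norm_smul, Real.norm_eq_abs]
      have h1 : |t' - t₀| = Δ := by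
        rw [ht'def]
        simp [abs_of_nonneg hΔpos.le]
      rw [h1]
      calc Δ * ‖G z - G 0‖ ≤ Δ * (2*M) := by
            apply mul_le_mul_of_nonneg_left (hGd2 z) hΔpos.le
        _ = 2*M*Δ := by ring
    have hMΔ : 4*M*Δ < κ := by
      have h1 : Δ ≤ κ/(4*M+1) := min_le_right _ _
      have h2 : 4*M*Δ ≤ 4*M*(κ/(4*M+1)) :=
        mul_le_mul_of_nonneg_left h1 (by linarith)
      have h3 : κ/(4*M+1)*(4*M+1) = κ := div_mul_cancel₀ _ (by linarith)
      nlinarith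
    have hg' : ∀ z : E, HasFDerivAt (fun w : E => w + t' • G w)
        (ContinuousLinearMap.id ℝ E + t' • DG z) z :=
      fun z => (hasFDerivAt_id z).add ((hG z).const_smul t')
    have hinj' : ∀ z : E, Function.Injective ⇑(ContinuousLinearMap.id ℝ E + t' • DG z) := by
      intro z
      have he : ⇑(ContinuousLinearMap.id ℝ E + t' • DG z) = fun w : E => w + t' • DG z w := by
        funext w
        simp [ContinuousLinearMap.add_apply, ContinuousLinearMap.smul_apply]
      rw [he]
      exact hinj t' ht'mem z
    have hbnd' : ∀ z, ‖z - z₀‖ = ρ →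
        ‖(z₀ + t' • G z₀) - t' • G 0‖ < ‖(z + t' • G z) - t' • G 0‖ := by
      intro z hz
      have hcenter : ‖(z₀ + t' • G z₀) - t' • G 0‖ ≤ 2*M*Δ := by
        have := hpert z₀
        rw [show z₀ + t₀ • G z₀ - t₀ • G 0 = 0 by rw [heqlim]; simp, sub_zero] at this
        exact this
      have hlow : κ - 2*M*Δ ≤ ‖(z + t' • G z) - t' • G 0‖ := by
        have h1 := hsph z hz
        have h2 := hpert z
        have h3 := norm_sub_le ((z + t' • G z) - t' • G 0)
          (((z + t' • G z) - t' • G 0) - ((z + t₀ • G z) - t₀ • G 0))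
        rw [sub_sub_cancel] at h3
        linarith
      calc ‖(z₀ + t' • G z₀) - t' • G 0‖ ≤ 2*M*Δ := hcenter
        _ < κ - 2*M*Δ := by linarith
        _ ≤ _ := hlow
    obtain ⟨z', hz'lt, hz'eq⟩ := aux_exists_zero (fun w : E => w + t' • G w)
      (fun z => ContinuousLinearMap.id ℝ E + t' • DG z) hg' hinj' (t' • G 0) z₀ ρ hρpos hbnd'
    have hz'ne : z' ≠ 0 := by
      intro h0
      rw [h0, zero_sub, norm_neg] at hz'lt
      have : ρ ≤ ‖z₀‖/2 := min_le_right _ _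
      linarith
    have ht'A : t' ∈ A := ⟨ht'mem, z', hz'ne, hz'eq⟩
    have : t₀ ≤ t' := csInf_le hAbdd ht'A
    linarith

end Aux

/-- If `F : H → H` is everywhere Fréchet differentiable, its range is contained
in a finite-dimensional subspace and is bounded, and for every `u` no real eigenvalue of the
derivative `DF u` lies in `(-∞, -1]`, then `u ↦ u + F u` is bijective. -/
theorem stmt_1 {H : Type*} [NormedAddCommGroup H] [InnerProductSpace ℝ H]
    [CompleteSpace H] [TopologicalSpace.SeparableSpace H]
    (F : H → H) (hcont : Continuous F) (DF : H → H →L[ℝ] H)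
    (hdiff : ∀ u : H, HasFDerivAt F (DF u) u)
    (hfin : ∃ S : Submodule ℝ H, FiniteDimensional ℝ S ∧ ∀ u : H, F u ∈ S)
    (hbd : Bornology.IsBounded (Set.range F))
    (heig : ∀ u : H, ∀ lam : ℝ, lam ≤ -1 → ∀ v : H, v ≠ 0 → DF u v ≠ lam • v) :
    Function.Bijective fun u : H => u + F u := by
  classical
  obtain ⟨S, hSfin, hSmem⟩ := hfin
  haveI : FiniteDimensional ℝ ↥S := hSfin
  obtain ⟨M, hMF'⟩ := isBounded_iff_forall_norm_le.mp hbd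
  have hMF : ∀ u, ‖F u‖ ≤ M := fun u => hMF' _ (Set.mem_range_self u)
  -- the derivative maps S to S
  have hderivmem : ∀ (x w : H), DF x w ∈ S := by
    intro x w
    have hline : HasDerivAt (fun τ : ℝ => x + τ • w) w 0 := by
      simpa using ((hasDerivAt_id (0:ℝ)).smul_const w).const_add x
    have hFl : HasDerivAt (fun τ : ℝ => F (x + τ • w)) (DF x w) 0 := by
      simpa [Function.comp_def] using (hdiff (x + (0:ℝ) • w)).comp_hasDerivAt 0 hline
    have hs := hasDerivAt_iff_tendsto_slope.mp hFl
    refine (S.closed_of_finiteDimensional).mem_of_tendsto hs ?_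
    filter_upwards [Filter.univ_mem] with τ _
    show slope (fun τ : ℝ => F (x + τ • w)) 0 τ ∈ S
    rw [slope_fun_def]
    simp only [vsub_eq_sub]
    exact S.smul_mem _ (S.sub_mem (hSmem _) (hSmem _))
  -- construction of the finite-dimensional reduction around each base point
  have setup : ∀ c : H, ∃ G : ↥S → ↥S, ∃ DG : ↥S → (↥S →L[ℝ] ↥S),
      (∀ s : ↥S, (G s : H) = F (c + ↑s)) ∧ (∀ s, HasFDerivAt G (DG s) s) ∧
      (∀ s, ‖G s‖ ≤ M) ∧
      (∀ t ∈ Set.Icc (0:ℝ) 1, ∀ s : ↥S,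
        Function.Injective fun w : ↥S => w + t • DG s w) := by
    intro c
    refine ⟨fun s => S.orthogonalProjectionOnto (F (c + ↑s)),
      fun s => ((S.orthogonalProjectionOnto).comp ((DF (c + ↑s)).comp S.subtypeL)), ?_, ?_, ?_, ?_⟩
    · intro s
      exact Submodule.starProjection_eq_self_iff.mpr (hSmem _)
    · intro s
      have h1 : HasFDerivAt (fun s : ↥S => c + (s : H)) S.subtypeL s := by
        simpa using (S.subtypeL.hasFDerivAt (x := s)).const_add c
      have h2 := (hdiff (c + ↑s)).comp s h1
      have h3 := (S.orthogonalProjectionOnto).hasFDerivAt.comp s h2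
      exact h3
    · intro s
      calc ‖S.orthogonalProjectionOnto (F (c + ↑s))‖
          = ‖((S.orthogonalProjectionOnto (F (c + ↑s)) : ↥S) : H)‖ := rfl
        _ = ‖F (c + ↑s)‖ := by
          have hP : ((S.orthogonalProjectionOnto (F (c + ↑s)) : ↥S) : H) = F (c + ↑s) :=
            Submodule.starProjection_eq_self_iff.mpr (hSmem _)
          rw [hP]
        _ ≤ M := hMF _
    · intro t ht s a b hab
      have hDGcoe : ∀ w : ↥S,
          ((((S.orthogonalProjectionOnto).comp ((DF (c + ↑s)).comp S.subtypeL)) w : ↥S) : H)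
          = DF (c + ↑s) ↑w := by
        intro w
        simp only [ContinuousLinearMap.comp_apply, Submodule.subtypeL_apply]
        exact Submodule.starProjection_eq_self_iff.mpr (hderivmem _ _)
      have hker : ∀ w : ↥S,
          w + t • ((S.orthogonalProjectionOnto).comp ((DF (c + ↑s)).comp S.subtypeL)) w = 0 →
          w = 0 := by
        intro w hw
        by_contra hw0
        have hwH : (w : H) ≠ 0 := by
          intro h
          exact hw0 (Subtype.ext h)
        have hcoe : (w : H) + t • DF (c + ↑s) (w : H) = 0 := by
          have h1 := congrArg (fun z : ↥S => (z : H)) hw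
          simp only [Submodule.coe_add, Submodule.coe_smul, Submodule.coe_zero] at h1
          rw [hDGcoe w] at h1
          exact h1
        rcases eq_or_lt_of_le ht.1 with h0 | htpos
        · rw [← h0, zero_smul, add_zero] at hcoe
          exact hwH hcoe
        · have h1 : t • DF (c + ↑s) (w:H) = -(w:H) := by
            have := hcoe
            linear_combination (norm := module) this
          have hD : DF (c + ↑s) (w : H) = (-t⁻¹) • (w : H) := by
            have h2 : t⁻¹ • (t • DF (c + ↑s) (w:H)) = t⁻¹ • (-(w:H)) := congrArg _ h1
            rw [smul_smul, inv_mul_cancel₀ (ne_of_gt htpos), one_smul, smul_neg] at h2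
            rw [h2, neg_smul]
          have h1t : (1:ℝ) ≤ t⁻¹ := by
            have hprod : t * t⁻¹ = 1 := mul_inv_cancel₀ (ne_of_gt htpos)
            have hipos : 0 < t⁻¹ := inv_pos.mpr htpos
            nlinarith [ht.2]
          exact heig (c + ↑s) (-t⁻¹) (by linarith) (w:H) hwH hD
      have hsubeq : (a - b) + t •
          ((S.orthogonalProjectionOnto).comp ((DF (c + ↑s)).comp S.subtypeL)) (a - b) = 0 := by
        have hmap : ((S.orthogonalProjectionOnto).comp ((DF (c + ↑s)).comp S.subtypeL)) (a - b)
            = ((S.orthogonalProjectionOnto).comp ((DF (c + ↑s)).comp S.subtypeL)) a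
              - ((S.orthogonalProjectionOnto).comp ((DF (c + ↑s)).comp S.subtypeL)) b :=
          map_sub _ _ _
        rw [hmap]
        have hab' : a + t • ((S.orthogonalProjectionOnto).comp ((DF (c + ↑s)).comp S.subtypeL)) a
            = b + t • ((S.orthogonalProjectionOnto).comp ((DF (c + ↑s)).comp S.subtypeL)) b := hab
        linear_combination (norm := module) hab'
      have := hker _ hsubeq
      exact sub_eq_zero.mp this
  constructor
  · -- injectivity
    intro u v huv
    obtain ⟨G, DG, hGcoe, hGd, hGM, hGinj⟩ := setup v
    have huv' : u + F u = v + F v := huv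
    have h1 : u - v = F v - F u :=
      sub_eq_sub_iff_add_eq_add.mpr (huv'.trans (add_comm v (F v)))
    have hmemS : u - v ∈ S := by
      rw [h1]; exact S.sub_mem (hSmem v) (hSmem u)
    have hkey : (⟨u - v, hmemS⟩ : ↥S) + G ⟨u - v, hmemS⟩ = G 0 := by
      apply Subtype.ext
      rw [Submodule.coe_add, hGcoe, hGcoe]
      show (u - v) + F (v + (u - v)) = F (v + ((0 : ↥S) : H))
      rw [show v + (u - v) = u by abel, show ((0 : ↥S) : H) = 0 from rfl, add_zero, h1]
      abel
    have hz := core_inj G DG hGd M hGM hGinj _ hkey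
    have h0 : u - v = 0 := by
      have := congrArg (fun z : ↥S => (z : H)) hz
      simpa using this
    exact sub_eq_zero.mp h0
  · -- surjectivity
    intro y
    obtain ⟨G, DG, hGcoe, hGd, hGM, hGinj⟩ := setup y
    have hM0 : 0 ≤ M := (norm_nonneg _).trans (hMF 0)
    have hg : ∀ s : ↥S, HasFDerivAt (fun w : ↥S => w + G w)
        (ContinuousLinearMap.id ℝ ↥S + DG s) s :=
      fun s => (hasFDerivAt_id s).add (hGd s)
    have hinj1 : ∀ s : ↥S, Function.Injective ⇑(ContinuousLinearMap.id ℝ ↥S + DG s) := by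
      intro s
      have he : ⇑(ContinuousLinearMap.id ℝ ↥S + DG s) = fun w : ↥S => w + (1:ℝ) • DG s w := by
        funext w
        simp [ContinuousLinearMap.add_apply]
      rw [he]
      exact hGinj 1 ⟨zero_le_one, le_refl 1⟩ s
    have hbnd : ∀ z : ↥S, ‖z - 0‖ = 2*M+1 →
        ‖((0:↥S) + G 0) - 0‖ < ‖(z + G z) - 0‖ := by
      intro z hz
      rw [sub_zero] at hz
      have h1 : ‖(0:↥S) + G 0 - 0‖ ≤ M := by simpa using hGM 0
      have h2 : ‖z‖ - ‖G z‖ ≤ ‖z + G z - 0‖ := by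
        rw [sub_zero]
        have h3 := norm_sub_le (z + G z) (G z)
        rw [add_sub_cancel_right] at h3
        linarith
      have h3 := hGM z
      rw [hz] at h2
      linarith
    obtain ⟨z, hzlt, hzeq⟩ := aux_exists_zero (fun w : ↥S => w + G w)
      (fun s => ContinuousLinearMap.id ℝ ↥S + DG s) hg hinj1 0 0 (2*M+1) (by linarith) hbnd
    refine ⟨y + ↑z, ?_⟩
    show (y + ↑z) + F (y + ↑z) = y
    have h1 : F (y + ↑z) = ↑(G z) := (hGcoe z).symm
    have h2 : (z + G z : ↥S) = 0 := hzeq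
    rw [h1, add_assoc, ← Submodule.coe_add, h2]
    simp
end

section
/- Let H be a separable real Hilbert space, let u₀, w₀ ∈ H and b ∈ ℝ, and assume ⟨u₀, w₀⟩ > −1. Then the functional planar flow layer f : H → H defined by f(u) = u + tanh(⟨w₀, u⟩ + b)·u₀ is bijective, where tanh is the real hyperbolic tangent function. -/
open scoped RealInnerProductSpace

private lemma aux_hasDerivAt_tanh (x : ℝ) :
    HasDerivAt Real.tanh (1 - Real.tanh x ^ 2) x := by
  have hc : Real.cosh x ≠ 0 := (Real.cosh_pos x).ne'
  have h := (Real.hasDerivAt_sinh x).div (Real.hasDerivAt_cosh x) hc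
  have he : Real.tanh = fun y => Real.sinh y / Real.cosh y :=
    funext fun y => Real.tanh_eq_sinh_div_cosh y
  rw [he]
  refine HasDerivAt.congr_deriv h ?_
  have h1 := Real.cosh_sq_sub_sinh_sq x
  field_simp

private lemma aux_tanh_sq_lt_one (x : ℝ) : Real.tanh x ^ 2 < 1 := by
  rw [Real.tanh_eq_sinh_div_cosh]
  have hc : 0 < Real.cosh x := Real.cosh_pos x
  have h1 := Real.cosh_sq_sub_sinh_sq x
  rw [div_pow, div_lt_one (by positivity)]
  nlinarith

private lemma aux_g_bijective (a : ℝ) (ha : -1 < a) :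
    Function.Bijective (fun t : ℝ => t + a * Real.tanh t) := by
  have hd : ∀ t : ℝ, HasDerivAt (fun t : ℝ => t + a * Real.tanh t)
      (1 + a * (1 - Real.tanh t ^ 2)) t := fun t =>
    (hasDerivAt_id t).add ((aux_hasDerivAt_tanh t).const_mul a)
  have hmono : StrictMono (fun t : ℝ => t + a * Real.tanh t) := by
    apply strictMono_of_deriv_pos
    intro t
    rw [(hd t).deriv]
    have h1 : Real.tanh t ^ 2 < 1 := aux_tanh_sq_lt_one t
    have h2 : 0 ≤ Real.tanh t ^ 2 := sq_nonneg _
    nlinarith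
  have hcont : Continuous (fun t : ℝ => t + a * Real.tanh t) :=
    continuous_id.add (continuous_const.mul
      (Differentiable.continuous fun x => (aux_hasDerivAt_tanh x).differentiableAt))
  have htanh_bd : ∀ t : ℝ, |Real.tanh t| ≤ 1 := fun t => by
    have := aux_tanh_sq_lt_one t
    rw [abs_le]
    constructor <;> nlinarith [sq_nonneg (Real.tanh t)]
  have htop : Filter.Tendsto (fun t : ℝ => t + a * Real.tanh t) Filter.atTop Filter.atTop := by
    apply Filter.tendsto_atTop_mono (f := fun t : ℝ => t - |a|)
    · intro t
      have := htanh_bd t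
      have h2 : |a * Real.tanh t| ≤ |a| := by
        rw [abs_mul]
        calc |a| * |Real.tanh t| ≤ |a| * 1 := by
              exact mul_le_mul_of_nonneg_left (htanh_bd t) (abs_nonneg a)
          _ = |a| := mul_one _
      have := (abs_le.mp h2).1
      linarith
    · exact Filter.tendsto_atTop_add_const_right _ _ Filter.tendsto_id
  have hbot : Filter.Tendsto (fun t : ℝ => t + a * Real.tanh t) Filter.atBot Filter.atBot := by
    apply Filter.tendsto_atBot_mono (f := fun t : ℝ => t + |a|)
    · intro t
      have h2 : |a * Real.tanh t| ≤ |a| := by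
        rw [abs_mul]
        calc |a| * |Real.tanh t| ≤ |a| * 1 := by
              exact mul_le_mul_of_nonneg_left (htanh_bd t) (abs_nonneg a)
          _ = |a| := mul_one _
      have := (abs_le.mp h2).2
      linarith
    · exact Filter.tendsto_atBot_add_const_right _ _ Filter.tendsto_id
  exact ⟨hmono.injective, hcont.surjective htop hbot⟩

/-- The functional planar flow layer
`f(u) = u + tanh(⟨w₀,u⟩ + b) u₀` with `⟨u₀,w₀⟩ > −1` is bijective. -/
theorem stmt_5 {H : Type*} [NormedAddCommGroup H] [InnerProductSpace ℝ H]
    [CompleteSpace H] [TopologicalSpace.SeparableSpace H]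
    (u₀ w₀ : H) (b : ℝ) (h : ⟪u₀, w₀⟫ > -1) :
    Function.Bijective fun u : H => u + Real.tanh (⟪w₀, u⟫ + b) • u₀ := by
  set a : ℝ := ⟪w₀, u₀⟫ with ha_def
  have ha : -1 < a := by rwa [ha_def, real_inner_comm]
  obtain ⟨ginj, gsurj⟩ := aux_g_bijective a ha
  constructor
  · intro u v huv
    simp only at huv
    have hw : ⟪w₀, u⟫ + Real.tanh (⟪w₀, u⟫ + b) * a
        = ⟪w₀, v⟫ + Real.tanh (⟪w₀, v⟫ + b) * a := by
      have := congrArg (fun x : H => ⟪w₀, x⟫) huv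
      simpa [inner_add_right, real_inner_smul_right, mul_comm] using this
    have hg : (⟪w₀, u⟫ + b) + a * Real.tanh (⟪w₀, u⟫ + b)
        = (⟪w₀, v⟫ + b) + a * Real.tanh (⟪w₀, v⟫ + b) := by linear_combination hw
    have ht : ⟪w₀, u⟫ + b = ⟪w₀, v⟫ + b := ginj hg
    have : Real.tanh (⟪w₀, u⟫ + b) = Real.tanh (⟪w₀, v⟫ + b) := by rw [ht]
    rw [this] at huv
    exact add_right_cancel huv
  · intro y
    obtain ⟨t, htv⟩ := gsurj (⟪w₀, y⟫ + b)
    simp only at htv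
    refine ⟨y - Real.tanh t • u₀, ?_⟩
    have hwu : ⟪w₀, y - Real.tanh t • u₀⟫ + b = t := by
      rw [inner_sub_right, real_inner_smul_right]
      rw [← ha_def] at *
      linarith [htv]
    simp only [hwu]
    abel
end

section
/- Let H be a separable real Hilbert space, let (φ₁, …, φ_M) be an orthonormal family in H, let R be an M×M real matrix and b ∈ ℝ^M. Define P : H → ℝ^M by P(u) = (⟨u, φ₁⟩, …, ⟨u, φ_M⟩) and Q : ℝ^M → H by Q(d) = Σ_{i=1}^M d_i φ_i. If no real eigenvalue of R lies in the interval (−∞, −1], then the functional projected transformation flow layer f : H → H defined by f(u) = u + Q(R(P(u) + b)) is bijective. -/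
open scoped RealInnerProductSpace

/-- The functional projected transformation flow layer
`f(u) = u + Q(R(P(u) + b))`, where `P(u) = (⟨u,φ₁⟩,…,⟨u,φ_M⟩)` and `Q(d) = ∑ dᵢ φᵢ` for an
orthonormal family `(φᵢ)`, is bijective provided no real eigenvalue of the matrix `R` lies
in `(-∞, -1]`. -/
theorem stmt_7 {H : Type*} [NormedAddCommGroup H] [InnerProductSpace ℝ H]
    [CompleteSpace H] [TopologicalSpace.SeparableSpace H]
    (M : ℕ) (φ : Fin M → H) (hφ : Orthonormal ℝ φ)
    (R : Matrix (Fin M) (Fin M) ℝ) (b : Fin M → ℝ)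
    (heig : ∀ lam : ℝ, lam ≤ -1 → ∀ x : Fin M → ℝ, x ≠ 0 → R.mulVec x ≠ lam • x) :
    Function.Bijective fun u : H =>
      u + ∑ i : Fin M, R.mulVec (fun j => ⟪u, φ j⟫ + b j) i • φ i := by
  classical
  -- coefficient extraction
  have key : ∀ (d : Fin M → ℝ) (j : Fin M), ⟪(∑ i : Fin M, d i • φ i), φ j⟫ = d j := by
    intro d j
    rw [sum_inner]
    have horth := orthonormal_iff_ite.mp hφ
    simp [real_inner_smul_left, horth]
  set L : (Fin M → ℝ) →ₗ[ℝ] (Fin M → ℝ) := Matrix.mulVecLin (1 + R) with hL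
  have hLapp : ∀ x, L x = x + R.mulVec x := by
    intro x
    simp [hL, Matrix.mulVecLin_apply, Matrix.add_mulVec, Matrix.one_mulVec]
  have hinj : Function.Injective L := by
    rw [← LinearMap.ker_eq_bot, LinearMap.ker_eq_bot']
    intro x hx
    by_contra hne
    apply heig (-1) le_rfl x hne
    have h0 : x + R.mulVec x = 0 := by rw [← hLapp]; exact hx
    have : R.mulVec x = -x := by linear_combination (norm := module) h0
    simpa using this
  have hsurj : Function.Surjective L := (LinearMap.injective_iff_surjective).mp hinj
  set e : (Fin M → ℝ) ≃ₗ[ℝ] (Fin M → ℝ) := LinearEquiv.ofBijective L ⟨hinj, hsurj⟩ with he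
  have heapp : ∀ x, e x = x + R.mulVec x := fun x => hLapp x
  rw [Function.bijective_iff_has_inverse]
  refine ⟨fun v => v - ∑ i : Fin M,
      R.mulVec (fun j => e.symm (fun j => ⟪v, φ j⟫ - R.mulVec b j) j + b j) i • φ i, ?_, ?_⟩
  · intro u
    simp only
    have hPf : (fun j => ⟪u + ∑ i : Fin M, R.mulVec (fun j => ⟪u, φ j⟫ + b j) i • φ i, φ j⟫
        - R.mulVec b j) = e (fun j => ⟪u, φ j⟫) := by
      funext j
      rw [heapp]
      simp only [inner_add_left, key]
      have : R.mulVec (fun j => ⟪u, φ j⟫ + b j)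
          = R.mulVec (fun j => ⟪u, φ j⟫) + R.mulVec b := by
        rw [← Matrix.mulVec_add]
        congr 1
      rw [this]
      simp [Pi.add_apply]
      ring
    rw [hPf, e.symm_apply_apply]
    abel
  · intro v
    simp only
    set c : Fin M → ℝ := e.symm (fun j => ⟪v, φ j⟫ - R.mulVec b j) with hc
    have hec : c + R.mulVec c = fun j => ⟪v, φ j⟫ - R.mulVec b j := by
      rw [← heapp, hc, e.apply_symm_apply]
    have hPg : (fun j => ⟪v - ∑ i : Fin M, R.mulVec (fun j => c j + b j) i • φ i, φ j⟫ + b j)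
        = fun j => c j + b j := by
      funext j
      simp only [inner_sub_left, key]
      have hR : R.mulVec (fun j => c j + b j) = R.mulVec c + R.mulVec b := by
        rw [← Matrix.mulVec_add]; congr 1
      have := congrFun hec j
      simp only [Pi.add_apply] at this
      rw [hR]
      simp only [Pi.add_apply]
      linarith
    rw [hPg]
    abel
end

section
/- Let H be a separable real Hilbert space, M a positive integer, A : ℝ^M → H and B : H → ℝ^M bounded linear operators, and b ∈ ℝ^M. Let tanh act coordinatewise on vectors in ℝ^M. Assume that the matrix of B∘A with respect to the standard basis of ℝ^M is upper triangular with every diagonal entry strictly greater than −1. Then the functional Sylvester flow layer f : H → H defined by f(u) = u + A(tanh(B(u) + b)) is bijective. -/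
namespace SylvesterAux

theorem hasDerivAt_tanh (x : ℝ) :
    HasDerivAt Real.tanh (1 / Real.cosh x ^ 2) x := by
  have h := (Real.hasDerivAt_sinh x).div (Real.hasDerivAt_cosh x) (Real.cosh_pos x).ne'
  have : Real.tanh = fun y => Real.sinh y / Real.cosh y := funext Real.tanh_eq_sinh_div_cosh
  rw [this]
  refine h.congr_deriv ?_
  have hc := Real.cosh_sq_sub_sinh_sq x
  congr 1
  nlinarith [hc]

theorem abs_tanh_lt_one (x : ℝ) : |Real.tanh x| < 1 := by
  rw [Real.tanh_eq_sinh_div_cosh, abs_div, abs_of_pos (Real.cosh_pos x),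
    div_lt_one (Real.cosh_pos x)]
  nlinarith [Real.cosh_sq_sub_sinh_sq x, Real.cosh_pos x, abs_nonneg (Real.sinh x),
    sq_abs (Real.sinh x)]

theorem tanh_strictMono : StrictMono Real.tanh := by
  apply strictMono_of_deriv_pos
  intro x
  rw [(hasDerivAt_tanh x).deriv]
  positivity

theorem tanh_lipschitz (x y : ℝ) : |Real.tanh x - Real.tanh y| ≤ |x - y| := by
  have : LipschitzWith 1 Real.tanh := by
    apply lipschitzWith_of_nnnorm_deriv_le (fun x => (hasDerivAt_tanh x).differentiableAt)
    intro x
    rw [(hasDerivAt_tanh x).deriv]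
    rw [← NNReal.coe_le_coe, coe_nnnorm, NNReal.coe_one, Real.norm_eq_abs,
      abs_of_pos (by positivity), div_le_one (by positivity)]
    nlinarith [Real.cosh_sq x, sq_nonneg (Real.sinh x)]
  simpa [Real.dist_eq] using this.dist_le_mul x y

theorem continuous_tanh : Continuous Real.tanh :=
  continuous_iff_continuousAt.2 fun x => (hasDerivAt_tanh x).continuousAt

/-- 1-dimensional fixed point: for `a > -1`, the equation `x = tanh (d - a x)` has a
unique solution. -/
theorem fixed_existsUnique (a d : ℝ) (ha : -1 < a) :
    ∃! x : ℝ, x = Real.tanh (d - a * x) := by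
  set g : ℝ → ℝ := fun x => x - Real.tanh (d - a * x) with hg
  have hmono : StrictMono g := by
    intro x y hxy
    have key : Real.tanh (d - a * y) - Real.tanh (d - a * x) < y - x := by
      rcases le_or_gt 0 a with h0 | h0
      · have : Real.tanh (d - a * y) ≤ Real.tanh (d - a * x) :=
          tanh_strictMono.monotone (by nlinarith)
        linarith
      · have := tanh_lipschitz (d - a * y) (d - a * x)
        have habs : |d - a * y - (d - a * x)| = (-a) * (y - x) := by
          rw [show d - a * y - (d - a * x) = (-a) * (y - x) by ring, abs_of_pos (by nlinarith)]
        have h1 : Real.tanh (d - a * y) - Real.tanh (d - a * x) ≤ (-a) * (y - x) := by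
          calc Real.tanh (d - a * y) - Real.tanh (d - a * x)
              ≤ |Real.tanh (d - a * y) - Real.tanh (d - a * x)| := le_abs_self _
            _ ≤ _ := by rw [← habs]; exact this
        nlinarith
    simp only [hg]
    linarith
  have hcont : Continuous g :=
    continuous_id.sub (continuous_tanh.comp (continuous_const.sub (continuous_const.mul
      continuous_id)))
  have hneg : g (-2) < 0 := by
    have := abs_tanh_lt_one (d - a * (-2))
    simp only [hg]
    cases abs_lt.1 this with
    | intro h1 h2 => linarith
  have hpos : 0 < g 2 := by
    have := abs_tanh_lt_one (d - a * 2)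
    simp only [hg]
    cases abs_lt.1 this with
    | intro h1 h2 => linarith
  have hI : (0 : ℝ) ∈ Set.Icc (g (-2)) (g 2) := ⟨hneg.le, hpos.le⟩
  obtain ⟨x, _, hx⟩ := intermediate_value_Icc (by norm_num : (-2:ℝ) ≤ 2) hcont.continuousOn hI
  refine ⟨x, by simp only [hg] at hx; linarith, ?_⟩
  intro y hy
  have hgy : g y = 0 := by simp only [hg]; linarith
  have hgx : g x = 0 := hx
  exact hmono.injective (hgy.trans hgx.symm)

/-- The unique fixed point. -/
noncomputable def tanhFix (a d : ℝ) : ℝ :=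
  if h : -1 < a then (fixed_existsUnique a d h).exists.choose else 0

theorem tanhFix_spec (a d : ℝ) (h : -1 < a) :
    tanhFix a d = Real.tanh (d - a * tanhFix a d) := by
  rw [tanhFix, dif_pos h]
  exact (fixed_existsUnique a d h).exists.choose_spec

/-- Descending recursion solving the triangular fixed-point system. -/
noncomputable def solAux (M : ℕ) (T : Fin M → Fin M → ℝ) (c : Fin M → ℝ) (k : Fin M) : ℝ :=
  tanhFix (T k k) (c k - ∑ j : Fin M, if h : k < j then T k j * solAux M T c j else 0)
termination_by M - (k : ℕ)
decreasing_by
  have h1 : (k : ℕ) < (j : ℕ) := h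
  have h2 := j.isLt
  omega

theorem sum_split (M : ℕ) (T : Fin M → Fin M → ℝ) (hT : ∀ i j, j < i → T i j = 0)
    (x : Fin M → ℝ) (i : Fin M) :
    ∑ j, T i j * x j = T i i * x i + ∑ j, (if i < j then T i j * x j else 0) := by
  have key : ∀ j : Fin M,
      T i j * x j = (if j = i then T i i * x i else 0) + (if i < j then T i j * x j else 0) := by
    intro j
    rcases lt_trichotomy j i with h | h | h
    · simp [hT i j h, h.ne, not_lt.2 h.le]
    · simp [h]
    · simp [h, h.ne']
  rw [Finset.sum_congr rfl (fun j _ => key j), Finset.sum_add_distrib,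
    Finset.sum_ite_eq' Finset.univ i (fun _ => T i i * x i)]
  simp

theorem solAux_spec (M : ℕ) (T : Fin M → Fin M → ℝ) (c : Fin M → ℝ)
    (hT : ∀ i j, j < i → T i j = 0) (hd : ∀ i, -1 < T i i) (k : Fin M) :
    solAux M T c k = Real.tanh (c k - ∑ j, T k j * solAux M T c j) := by
  have heq : solAux M T c k
      = tanhFix (T k k) (c k - ∑ j : Fin M, if h : k < j then T k j * solAux M T c j else 0) := by
    rw [solAux]
  rw [heq, tanhFix_spec _ _ (hd k), ← heq]
  congr 1
  rw [sum_split M T hT (solAux M T c) k]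
  simp only [dite_eq_ite]
  ring

/-- Existence and uniqueness of the triangular fixed point. -/
theorem multiFix (M : ℕ) (T : Fin M → Fin M → ℝ) (c : Fin M → ℝ)
    (hT : ∀ i j, j < i → T i j = 0) (hd : ∀ i, -1 < T i i) :
    ∃! x : Fin M → ℝ, ∀ i, x i = Real.tanh (c i - ∑ j, T i j * x j) := by
  refine ⟨solAux M T c, solAux_spec M T c hT hd, ?_⟩
  intro y hy
  have hx := solAux_spec M T c hT hd
  set x := solAux M T c with hxdef
  have claim : ∀ n : ℕ, ∀ i : Fin M, M - n ≤ (i : ℕ) → y i = x i := by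
    intro n
    induction n with
    | zero => intro i hi; exact absurd hi (by have := i.isLt; omega)
    | succ n ih =>
      intro i hi
      have hup : ∀ j : Fin M, i < j → y j = x j := by
        intro j hj
        exact ih j (by have h1 : (i : ℕ) < (j : ℕ) := hj; omega)
      have hsum : (∑ j : Fin M, if i < j then T i j * y j else 0)
          = ∑ j : Fin M, if i < j then T i j * x j else 0 := by
        apply Finset.sum_congr rfl
        intro j _
        by_cases h : i < j
        · simp [h, hup j h]
        · simp [h]
      set d : ℝ := c i - ∑ j : Fin M, (if i < j then T i j * x j else 0) with hddef
      have hyi : y i = Real.tanh (d - T i i * y i) := by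
        rw [hddef]
        have := hy i
        rw [sum_split M T hT y i] at this
        rw [← hsum]
        convert this using 2
        ring
      have hxi : x i = Real.tanh (d - T i i * x i) := by
        rw [hddef]
        have := hx i
        rw [sum_split M T hT x i] at this
        convert this using 2
        ring
      obtain ⟨z, _, huniq⟩ := fixed_existsUnique (T i i) d (hd i)
      rw [huniq (y i) hyi, huniq (x i) hxi]
  funext i
  exact claim M i (by omega)

end SylvesterAux

open scoped RealInnerProductSpace

/-- The functional Sylvester flow layer `f(u) = u + A(tanh(B(u) + b))` is
bijective provided the matrix of `B ∘ A` (w.r.t. the standard basis of `ℝ^M`) is upper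
triangular with all diagonal entries strictly greater than `−1`. -/
theorem stmt_10 {H : Type*} [NormedAddCommGroup H] [InnerProductSpace ℝ H]
    [CompleteSpace H] [TopologicalSpace.SeparableSpace H]
    (M : ℕ) (hM : 0 < M)
    (A : EuclideanSpace ℝ (Fin M) →L[ℝ] H) (B : H →L[ℝ] EuclideanSpace ℝ (Fin M))
    (b : EuclideanSpace ℝ (Fin M))
    (htri : ∀ i j : Fin M, j < i → B (A (EuclideanSpace.single j (1 : ℝ))) i = 0)
    (hdiag : ∀ i : Fin M, -1 < B (A (EuclideanSpace.single i (1 : ℝ))) i) :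
    Function.Bijective fun u : H =>
      u + A (WithLp.toLp 2 (fun i => Real.tanh (B u i + b i))) := by
  set T : Fin M → Fin M → ℝ := fun i j => B (A (EuclideanSpace.single j (1 : ℝ))) i with hTdef
  have expand : ∀ (t : EuclideanSpace ℝ (Fin M)) (i : Fin M),
      B (A t) i = ∑ j, T i j * t j := by
    intro t i
    have ht := (EuclideanSpace.basisFun (Fin M) ℝ).sum_repr t
    simp only [EuclideanSpace.basisFun_repr, EuclideanSpace.basisFun_apply] at ht
    conv_lhs => rw [← ht]
    rw [map_sum, map_sum, WithLp.ofLp_sum, Finset.sum_apply]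
    apply Finset.sum_congr rfl
    intro j _
    rw [map_smul, map_smul, PiLp.smul_apply, smul_eq_mul]
    exact mul_comm _ _
  rw [Function.bijective_iff_existsUnique]
  intro v
  set c : Fin M → ℝ := fun i => B v i + b i with hcdef
  obtain ⟨t, ht, htu⟩ := SylvesterAux.multiFix M T c htri hdiag
  have key : ∀ (s : Fin M → ℝ) (i : Fin M),
      B (v - A (WithLp.toLp 2 s)) i + b i = c i - ∑ j, T i j * s j := by
    intro s i
    rw [map_sub, PiLp.sub_apply, expand _ i, hcdef]
    simp only [WithLp.ofLp_toLp]
    ring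
  refine ⟨v - A (WithLp.toLp 2 t), ?_, ?_⟩
  · show (v - A (WithLp.toLp 2 t)) + A (WithLp.toLp 2 (fun i => Real.tanh (B (v - A (WithLp.toLp 2 t)) i + b i))) = v
    have heq : (fun i => Real.tanh (B (v - A (WithLp.toLp 2 t)) i + b i)) = t := by
      funext i
      rw [key t i, ← ht i]
    rw [heq]
    abel
  · intro u hu
    set s : Fin M → ℝ := fun i => Real.tanh (B u i + b i) with hsdef
    have hu2 : u + A (WithLp.toLp 2 s) = v := hu
    have hu' : u = v - A (WithLp.toLp 2 s) := eq_sub_of_add_eq hu2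
    have hs : ∀ i, s i = Real.tanh (c i - ∑ j, T i j * s j) := by
      intro i
      have harg : B u i + b i = c i - ∑ j, T i j * s j := by
        rw [hu']; exact key s i
      show Real.tanh (B u i + b i) = _
      rw [harg]
    have hst : s = t := htu s hs
    rw [hu', hst]
end

section
/- Let D ⊂ ℝ^d be a compact set with finite positive Lebesgue measure, and let {D_L}_{L=1}^∞ be a discrete refinement of D, i.e., a sequence of nested finite sets D_1 ⊂ D_2 ⊂ ⋯ ⊂ D with |D_L| = L such that for every ε > 0 there exists L(ε) with D contained in the union of open ε-balls centered at the points of D_{L(ε)}. Let w ∈ C(D, ℝ), u₀ ∈ L²(D), b ∈ ℝ, and define the functional planar flow layer component F : L²(D) → L²(D) by F(a) = u₀ · tanh(⟨w, a⟩_{L²(D)} + b), where ⟨w, a⟩_{L²(D)} = ∫_D w(x)a(x) dx. Then F is discretization-invariant: there exists a sequence of maps F̂_L : ℝ^L → L²(D) such that for every compact subset K of C(D, ℝ) (with the supremum norm), sup_{a ∈ K} ‖F̂_L(a|_{D_L}) − F(a)‖_{L²(D)} → 0 as L → ∞, where a|_{D_L} ∈ ℝ^L denotes the vector of values of a at the L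 points of D_L. -/
open MeasureTheory

attribute [local instance] Classical.propDecidable

section NearAux

variable {X : Type*} [MetricSpace X]

/-- `i` is an index of an element of `l` of minimal distance to `x`. -/
def nearP (l : List X) (x : X) (i : ℕ) : Prop :=
  i < l.length ∧ ∀ p ∈ l, dist x (l.getD i x) ≤ dist x p

lemma near_exists (l : List X) (hl : l ≠ []) (x : X) : ∃ i, nearP l x i := by
  have hne : l.toFinset.Nonempty := by
    simpa [List.toFinset_eq_empty_iff] using hl
  obtain ⟨p, hp, hmin⟩ := l.toFinset.exists_min_image (fun p => dist x p) hne
  obtain ⟨n, hn⟩ := List.mem_iff_get.mp (List.mem_toFinset.mp hp)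
  refine ⟨n.1, n.2, fun q hq => ?_⟩
  have hgd : l.getD n.1 x = p := by
    rw [List.getD_eq_getElem?_getD, List.getElem?_eq_getElem n.2]
    simpa [List.get] using hn
  rw [hgd]
  exact hmin q (List.mem_toFinset.mpr hq)

noncomputable def nearIdx (l : List X) (hl : l ≠ []) (x : X) : ℕ :=
  Nat.find (near_exists l hl x)

lemma nearIdx_spec (l : List X) (hl : l ≠ []) (x : X) :
    nearP l x (nearIdx l hl x) := Nat.find_spec (near_exists l hl x)

noncomputable def nearPt (l : List X) (hl : l ≠ []) (x : X) : X :=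
  l.getD (nearIdx l hl x) x

lemma nearPt_mem (l : List X) (hl : l ≠ []) (x : X) : nearPt l hl x ∈ l := by
  have h := (nearIdx_spec l hl x).1
  have : nearPt l hl x = l[nearIdx l hl x] := by
    rw [nearPt, List.getD_eq_getElem?_getD, List.getElem?_eq_getElem h]; rfl
  rw [this]
  exact List.getElem_mem h

lemma nearPt_le (l : List X) (hl : l ≠ []) (x : X) :
    ∀ p ∈ l, dist x (nearPt l hl x) ≤ dist x p :=
  (nearIdx_spec l hl x).2

lemma measurable_nearP_set [MeasurableSpace X] [OpensMeasurableSpace X]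
    (l : List X) (i : ℕ) : MeasurableSet {x : X | nearP l x i} := by
  by_cases hi : i < l.length
  · have hset : {x : X | nearP l x i} = ⋂ p ∈ l.toFinset, {x : X | dist x l[i] ≤ dist x p} := by
      ext x
      have hgd : l.getD i x = l[i] := by
        rw [List.getD_eq_getElem?_getD, List.getElem?_eq_getElem hi]; rfl
      simp [nearP, hi, hgd, List.mem_toFinset]
    rw [hset]
    refine MeasurableSet.biInter (l.toFinset.countable_toSet) fun p _ => ?_
    exact (isClosed_le (continuous_id.dist continuous_const)
      (continuous_id.dist continuous_const)).measurableSet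
  · have hset : {x : X | nearP l x i} = ∅ := by
      ext x; simp [nearP, hi]
    rw [hset]; exact MeasurableSet.empty

lemma measurable_comp_nearPt [MeasurableSpace X] [OpensMeasurableSpace X]
    (l : List X) (hl : l ≠ []) (f : X → ℝ) :
    Measurable fun x => f (nearPt l hl x) := by
  have hidx : Measurable fun x => nearIdx l hl x :=
    measurable_find (near_exists l hl) (measurable_nearP_set l)
  have hF : Measurable fun i : ℕ => (if h : i < l.length then f l[i] else 0) :=
    measurable_from_top
  have heq : (fun x => f (nearPt l hl x)) =
      (fun i : ℕ => (if h : i < l.length then f l[i] else 0)) ∘ fun x => nearIdx l hl x := by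
    funext x
    have h := (nearIdx_spec l hl x).1
    have hgd : nearPt l hl x = l[nearIdx l hl x] := by
      rw [nearPt, List.getD_eq_getElem?_getD, List.getElem?_eq_getElem h]; rfl
    simp [Function.comp, h, hgd]
  rw [heq]
  exact hF.comp hidx

end NearAux

lemma tanh_lipschitz (p q : ℝ) : |Real.tanh p - Real.tanh q| ≤ |p - q| := by
  have hderiv : ∀ x : ℝ, HasDerivAt Real.tanh (1 / Real.cosh x ^ 2) x := by
    intro x
    have hc : Real.cosh x ≠ 0 := (Real.cosh_pos x).ne'
    have h := (Real.hasDerivAt_sinh x).div (Real.hasDerivAt_cosh x) hc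
    have hfun : (fun y => Real.sinh y / Real.cosh y) = Real.tanh := by
      funext y; rw [Real.tanh_eq_sinh_div_cosh]
    rw [show (Real.sinh / Real.cosh) = (fun y => Real.sinh y / Real.cosh y) from rfl, hfun] at h
    refine h.congr_deriv ?_
    have hsq := Real.cosh_sq x
    rw [div_left_inj' (pow_ne_zero 2 hc)]
    nlinarith [Real.cosh_sq x]
  have hbound : ∀ x : ℝ, ‖(1 : ℝ) / Real.cosh x ^ 2‖ ≤ 1 := by
    intro x
    have h1 : (1 : ℝ) ≤ Real.cosh x := Real.one_le_cosh x
    have h2 : (1 : ℝ) ≤ Real.cosh x ^ 2 := by nlinarith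
    rw [Real.norm_eq_abs, abs_of_pos (by positivity)]
    rw [div_le_one (by positivity)]
    exact h2
  have := Convex.norm_image_sub_le_of_norm_hasDerivWithin_le
    (f := Real.tanh) (f' := fun x => 1 / Real.cosh x ^ 2) (C := 1) (s := Set.univ)
    (fun x _ => (hderiv x).hasDerivWithinAt) (fun x _ => hbound x) convex_univ
    (Set.mem_univ q) (Set.mem_univ p)
  simpa [Real.norm_eq_abs] using this

/-- Extension of a function on a subset by zero. -/
noncomputable def extZero {E : Type*} (s : Set E) (v : ↥s → ℝ) (p : E) : ℝ :=
  if hp : p ∈ s then v ⟨p, hp⟩ else 0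

lemma extZero_pos {E : Type*} {s : Set E} (v : ↥s → ℝ) {p : E} (hp : p ∈ s) :
    extZero s v p = v ⟨p, hp⟩ := dif_pos hp

lemma extZero_neg {E : Type*} {s : Set E} (v : ↥s → ℝ) {p : E} (hp : ¬ p ∈ s) :
    extZero s v p = 0 := dif_neg hp

set_option maxHeartbeats 2000000 in
/-- The functional planar flow layer component
`F(a) = tanh(⟨w, a⟩_{L²(D)} + b) • u₀` on `L²(D)` is discretization-invariant with respect to
any discrete refinement `{D_L}` of the compact set `D`: there are maps `F̂_L` defined on the
vectors of point values on `D_L` such that `sup_{a ∈ K} ‖F̂_L(a|_{D_L}) − F(a)‖_{L²} → 0`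
for every compact `K ⊆ C(D, ℝ)`. -/
theorem stmt_14 (d : ℕ) (D : Set (EuclideanSpace ℝ (Fin d)))
    (hDc : IsCompact D) (hDpos : 0 < volume D) (hDfin : volume D < ⊤)
    (DL : ℕ → Finset (EuclideanSpace ℝ (Fin d)))
    (hnested : ∀ L : ℕ, DL L ⊆ DL (L + 1))
    (hsub : ∀ L : ℕ, (DL L : Set (EuclideanSpace ℝ (Fin d))) ⊆ D)
    (hcard : ∀ L : ℕ, (DL L).card = L)
    (hnet : ∀ ε > (0 : ℝ), ∃ L : ℕ,
      D ⊆ ⋃ p ∈ DL L, Metric.ball p ε)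
    (w : C(D, ℝ))
    (u₀ : Lp ℝ 2 (volume.comap ((↑) : D → EuclideanSpace ℝ (Fin d))))
    (b : ℝ) :
    ∃ Fhat : (L : ℕ) → (↥((DL L : Set (EuclideanSpace ℝ (Fin d)))) → ℝ) →
        Lp ℝ 2 (volume.comap ((↑) : D → EuclideanSpace ℝ (Fin d))),
      ∀ K : Set C(D, ℝ), IsCompact K →
        ∀ ε > (0 : ℝ), ∃ L₀ : ℕ, ∀ L > L₀, ∀ a ∈ K,
          ‖Fhat L (fun p => a ⟨p.1, hsub L p.2⟩) -
              Real.tanh ((∫ y, w y * a y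
                ∂(volume.comap ((↑) : D → EuclideanSpace ℝ (Fin d)))) + b) • u₀‖ < ε := by
  have hDm : MeasurableSet D := hDc.isClosed.measurableSet
  haveI : CompactSpace D := isCompact_iff_compactSpace.mp hDc
  have hemb : MeasurableEmbedding ((↑) : D → EuclideanSpace ℝ (Fin d)) :=
    MeasurableEmbedding.subtype_coe hDm
  haveI : IsFiniteMeasure (volume.comap ((↑) : D → EuclideanSpace ℝ (Fin d))) := by
    constructor
    rw [hemb.comap_apply, Set.image_univ, Subtype.range_coe]
    exact hDfin
  -- monotonicity of the refinement
  have hmono : ∀ m n : ℕ, m ≤ n → DL m ⊆ DL n := by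
    intro m n hmn
    induction hmn with
    | refl => exact subset_rfl
    | step h ih => exact fun x hx => hnested _ (ih hx)
  refine ⟨fun L v =>
    if hl : (DL L).toList ≠ [] then
      Real.tanh ((∫ x : D, w x *
          extZero (DL L : Set (EuclideanSpace ℝ (Fin d))) v
          (nearPt (DL L).toList hl (x : EuclideanSpace ℝ (Fin d))) ∂(volume.comap ((↑) : D → EuclideanSpace ℝ (Fin d)))) + b) • u₀
    else 0, ?_⟩
  intro K hK ε hε
  rcases K.eq_empty_or_nonempty with hKe | ⟨a₀, ha₀⟩
  · exact ⟨0, fun L _ a ha => by simp [hKe] at ha⟩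
  -- constants
  set V : ℝ := ((volume.comap ((↑) : D → EuclideanSpace ℝ (Fin d))) Set.univ).toReal with hV
  have hV0 : 0 ≤ V := ENNReal.toReal_nonneg
  set C : ℝ := (‖w‖ + 1) * (V + 1) * (‖u₀‖ + 1) with hCdef
  have hC : 0 < C := by positivity
  set δ : ℝ := ε / (2 * C) with hδdef
  have hδ : 0 < δ := by positivity
  -- equicontinuity via total boundedness
  obtain ⟨t, htf, htsub⟩ := Metric.totallyBounded_iff.mp hK.totallyBounded (δ / 3) (by positivity)
  have key : ∀ g ∈ t, ∃ η, 0 < η ∧ ∀ x y : D, dist x y < η → dist (g x) (g y) < δ / 3 := by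
    intro g _
    obtain ⟨η, hpos, hspec⟩ := ContinuousMap.uniform_continuity g (δ / 3) (by positivity)
    exact ⟨η, hpos, fun x y h => hspec h⟩
  choose! η hηpos hηspec using key
  -- t is nonempty since K is
  obtain ⟨g₀, hg₀t, _⟩ := by
    have := htsub ha₀
    simpa using this
  set T : Finset C(D, ℝ) := htf.toFinset with hT
  have hTne : T.Nonempty := ⟨g₀, htf.mem_toFinset.mpr hg₀t⟩
  set ηm : ℝ := T.inf' hTne η with hηm
  have hηm0 : 0 < ηm := by
    rw [hηm, Finset.lt_inf'_iff]
    intro g hg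
    exact hηpos g (htf.mem_toFinset.mp hg)
  -- uniform equicontinuity on K
  have hequi : ∀ a ∈ K, ∀ x y : D, dist x y < ηm → |a x - a y| < δ := by
    intro a ha x y hxy
    have := htsub ha
    simp only [Set.mem_iUnion] at this
    obtain ⟨g, hg, hag⟩ := this
    have hag' : dist a g < δ / 3 := by simpa [Metric.mem_ball] using hag
    have h1 : dist (a x) (g x) < δ / 3 := lt_of_le_of_lt (ContinuousMap.dist_apply_le_dist x) hag'
    have h3 : dist (g y) (a y) < δ / 3 := by
      rw [dist_comm]
      exact lt_of_le_of_lt (ContinuousMap.dist_apply_le_dist y) hag'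
    have h2 : dist (g x) (g y) < δ / 3 := by
      apply hηspec g hg
      exact lt_of_lt_of_le hxy (Finset.inf'_le η (htf.mem_toFinset.mpr hg))
    calc |a x - a y| = dist (a x) (a y) := (Real.dist_eq _ _).symm
      _ ≤ dist (a x) (g x) + dist (g x) (g y) + dist (g y) (a y) := dist_triangle4 _ _ _ _
      _ < δ / 3 + δ / 3 + δ / 3 := by linarith
      _ = δ := by ring
  -- net scale
  obtain ⟨L₁, hL₁⟩ := hnet ηm hηm0
  refine ⟨L₁, fun L hL a ha => ?_⟩
  have hLpos : 0 < L := lt_of_le_of_lt (Nat.zero_le _) hL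
  have hne : (DL L).Nonempty := Finset.card_pos.mp (by rw [hcard]; exact hLpos)
  have hl : (DL L).toList ≠ [] := by
    rw [Ne, Finset.toList_eq_nil]
    exact hne.ne_empty
  beta_reduce
  rw [dif_pos hl]
  set l : List (EuclideanSpace ℝ (Fin d)) := (DL L).toList with hldef
  -- the extended function
  set vv : EuclideanSpace ℝ (Fin d) → ℝ :=
    extZero (DL L : Set (EuclideanSpace ℝ (Fin d)))
      (fun p : ↥(DL L : Set (EuclideanSpace ℝ (Fin d))) => a ⟨p.1, hsub L p.2⟩) with hvv
  -- nearPt lands in D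
  have hmemD : ∀ x : D, nearPt l hl (x : EuclideanSpace ℝ (Fin d)) ∈ D := by
    intro x
    apply hsub L
    exact Finset.mem_coe.mpr (Finset.mem_toList.mp (nearPt_mem l hl _))
  have hmemDL : ∀ x : D,
      nearPt l hl (x : EuclideanSpace ℝ (Fin d)) ∈ (DL L : Set (EuclideanSpace ℝ (Fin d))) := by
    intro x
    exact Finset.mem_coe.mpr (Finset.mem_toList.mp (nearPt_mem l hl _))
  -- close to x
  have hclose : ∀ x : D, dist (x : EuclideanSpace ℝ (Fin d)) (nearPt l hl x) < ηm := by
    intro x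
    have hx : (x : EuclideanSpace ℝ (Fin d)) ∈ ⋃ p ∈ DL L₁, Metric.ball p ηm := hL₁ x.2
    simp only [Set.mem_iUnion] at hx
    obtain ⟨q, hq, hxq⟩ := hx
    have hqL : q ∈ DL L := hmono L₁ L (le_of_lt hL) hq
    have hql : q ∈ l := Finset.mem_toList.mpr hqL
    exact lt_of_le_of_lt (nearPt_le l hl _ q hql) (by simpa [Metric.mem_ball] using hxq)
  -- pointwise bound
  have hpt : ∀ x : D, |vv (nearPt l hl (x : EuclideanSpace ℝ (Fin d))) - a x| ≤ δ := by
    intro x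
    have hmem := hmemDL x
    have hval : vv (nearPt l hl (x : EuclideanSpace ℝ (Fin d))) =
        a ⟨nearPt l hl (x : EuclideanSpace ℝ (Fin d)), hsub L hmem⟩ := by
      rw [hvv, extZero_pos _ hmem]
    rw [hval]
    apply le_of_lt
    apply hequi a ha
    rw [Subtype.dist_eq]
    simpa [dist_comm] using hclose x
  -- integrands
  set f₁ : D → ℝ := fun x => w x * vv (nearPt l hl (x : EuclideanSpace ℝ (Fin d))) with hf₁def
  set f₂ : D → ℝ := fun x => w x * a x with hf₂def
  have hwb : ∀ x : D, |w x| ≤ ‖w‖ := fun x => ContinuousMap.norm_coe_le_norm w x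
  have hab : ∀ x : D, |a x| ≤ ‖a‖ := fun x => ContinuousMap.norm_coe_le_norm a x
  have hvvb : ∀ p, |vv p| ≤ ‖a‖ := by
    intro p
    rw [hvv]
    by_cases hp : p ∈ (DL L : Set (EuclideanSpace ℝ (Fin d)))
    · rw [extZero_pos _ hp]; exact ContinuousMap.norm_coe_le_norm a _
    · rw [extZero_neg _ hp]; simp
  have hmeas₁ : Measurable f₁ := by
    apply Measurable.mul
    · exact w.continuous.measurable
    · exact (measurable_comp_nearPt l hl vv).comp measurable_subtype_coe
  have hint₁ : Integrable f₁ (volume.comap ((↑) : D → EuclideanSpace ℝ (Fin d))) := by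
    refine ⟨hmeas₁.aestronglyMeasurable, HasFiniteIntegral.of_bounded (C := ‖w‖ * ‖a‖)
      (Filter.Eventually.of_forall fun x => ?_)⟩
    simp only [hf₁def, Real.norm_eq_abs, abs_mul]
    exact mul_le_mul (hwb x) (hvvb _) (abs_nonneg _) (norm_nonneg _)
  have hint₂ : Integrable f₂ (volume.comap ((↑) : D → EuclideanSpace ℝ (Fin d))) := by
    refine ⟨(w.continuous.mul a.continuous).aestronglyMeasurable,
      HasFiniteIntegral.of_bounded (C := ‖w‖ * ‖a‖) (Filter.Eventually.of_forall fun x => ?_)⟩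
    simp only [hf₂def, Real.norm_eq_abs, abs_mul]
    exact mul_le_mul (hwb x) (hab x) (abs_nonneg _) (norm_nonneg _)
  -- integral difference bound
  have hI : |(∫ x, f₁ x ∂(volume.comap ((↑) : D → EuclideanSpace ℝ (Fin d)))) - ∫ x, f₂ x ∂(volume.comap ((↑) : D → EuclideanSpace ℝ (Fin d)))| ≤ ‖w‖ * δ * V := by
    rw [← integral_sub hint₁ hint₂, ← Real.norm_eq_abs]
    calc ‖∫ x, (f₁ x - f₂ x) ∂(volume.comap ((↑) : D → EuclideanSpace ℝ (Fin d)))‖ ≤ (‖w‖ * δ) * ((volume.comap ((↑) : D → EuclideanSpace ℝ (Fin d))) Set.univ).toReal := by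
          apply norm_integral_le_of_norm_le_const
          apply Filter.Eventually.of_forall
          intro x
          simp only [hf₁def, hf₂def, Real.norm_eq_abs]
          rw [show w x * vv (nearPt l hl (x : EuclideanSpace ℝ (Fin d))) - w x * a x =
            w x * (vv (nearPt l hl (x : EuclideanSpace ℝ (Fin d))) - a x) by ring, abs_mul]
          exact mul_le_mul (hwb x) (hpt x) (abs_nonneg _) (norm_nonneg _)
      _ = ‖w‖ * δ * V := by rw [hV]
  -- conclude
  have htl := tanh_lipschitz ((∫ x, f₁ x ∂(volume.comap ((↑) : D → EuclideanSpace ℝ (Fin d)))) + b) ((∫ x, f₂ x ∂(volume.comap ((↑) : D → EuclideanSpace ℝ (Fin d)))) + b)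
  have htl2 : |Real.tanh ((∫ x, f₁ x ∂(volume.comap ((↑) : D → EuclideanSpace ℝ (Fin d)))) + b) - Real.tanh ((∫ x, f₂ x ∂(volume.comap ((↑) : D → EuclideanSpace ℝ (Fin d)))) + b)| ≤
      ‖w‖ * δ * V := by
    apply le_trans htl
    calc |(∫ x, f₁ x ∂(volume.comap ((↑) : D → EuclideanSpace ℝ (Fin d)))) + b - ((∫ x, f₂ x ∂(volume.comap ((↑) : D → EuclideanSpace ℝ (Fin d)))) + b)| = |(∫ x, f₁ x ∂(volume.comap ((↑) : D → EuclideanSpace ℝ (Fin d)))) - ∫ x, f₂ x ∂(volume.comap ((↑) : D → EuclideanSpace ℝ (Fin d)))| := by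
          congr 1; ring
      _ ≤ ‖w‖ * δ * V := hI
  have hnorm : ‖Real.tanh ((∫ x, f₁ x ∂(volume.comap ((↑) : D → EuclideanSpace ℝ (Fin d)))) + b) • u₀ -
      Real.tanh ((∫ x, f₂ x ∂(volume.comap ((↑) : D → EuclideanSpace ℝ (Fin d)))) + b) • u₀‖ ≤ ‖w‖ * δ * V * ‖u₀‖ := by
    rw [← sub_smul, norm_smul, Real.norm_eq_abs]
    exact mul_le_mul_of_nonneg_right htl2 (norm_nonneg _)
  have hfinal : ‖w‖ * δ * V * ‖u₀‖ < ε := by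
    have hX : ‖w‖ * V * ‖u₀‖ ≤ (‖w‖ + 1) * (V + 1) * (‖u₀‖ + 1) := by
      nlinarith [mul_nonneg (norm_nonneg w) hV0, mul_nonneg hV0 (norm_nonneg u₀),
        mul_nonneg (norm_nonneg w) (norm_nonneg u₀), norm_nonneg w, hV0, norm_nonneg u₀]
    have h1 : ‖w‖ * δ * V * ‖u₀‖ ≤ δ * C := by
      rw [hCdef]
      calc ‖w‖ * δ * V * ‖u₀‖ = δ * (‖w‖ * V * ‖u₀‖) := by ring
        _ ≤ δ * ((‖w‖ + 1) * (V + 1) * (‖u₀‖ + 1)) := mul_le_mul_of_nonneg_left hX hδ.le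
    have h2 : δ * C = ε / 2 := by
      rw [hδdef]
      field_simp [hC.ne']
    calc ‖w‖ * δ * V * ‖u₀‖ ≤ δ * C := h1
      _ = ε / 2 := h2
      _ < ε := by linarith
  exact lt_of_le_of_lt hnorm hfinal
end
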